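/- Let C : [0,T] ⇉ ℝ^e be compact convex valued and Hausdorff-continuous, and suppose B(x,r) ⊆ C(t) for all t, for some x ∈ ℝ^e and r > 0. For n ∈ ℕ*, let t_k^n = kT/n and define the catching-up scheme Y_0^n := a ∈ C(0), Y_{k+1}^n := p_{C(t_{k+1}^n)}(Y_k^n). Then the total variation of the discrete sequence satisfies ∑_{k=0}^{n-1} ‖Y_{k+1}^n - Y_k^n‖ ≤ l(r, ‖a - x‖), where l(s,S) = max{0, (S² - s²)/(2s)} if e > 1 and l(s,S) = max{0, S - s} if e = 1. -/

import Mathlib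

open scoped BigOperators

noncomputable section

open Classical in

/-- The metric projection onto a set `C` (via choice; `x` itself if no closest
point exists). -/
def metricProj {e : ℕ} (C : Set (EuclideanSpace ℝ (Fin e)))
    (x : EuclideanSpace ℝ (Fin e)) : EuclideanSpace ℝ (Fin e) :=
  if h : ∃ y ∈ C, ∀ z ∈ C, dist x y ≤ dist x z then h.choose else x

/-- Valadier's bound `l(s,S)`. -/
def valadierBound (e : ℕ) (s S : ℝ) : ℝ :=
  if 1 < e then max 0 ((S ^ 2 - s ^ 2) / (2 * s)) else max 0 (S - s)

open scoped RealInnerProductSpace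

section Aux

variable {e : ℕ}

lemma metricProj_spec {C : Set (EuclideanSpace ℝ (Fin e))}
    (hne : C.Nonempty) (hcomp : IsCompact C) (y : EuclideanSpace ℝ (Fin e)) :
    metricProj C y ∈ C ∧ ∀ z ∈ C, dist y (metricProj C y) ≤ dist y z := by
  have h : ∃ p ∈ C, ∀ z ∈ C, dist y p ≤ dist y z := by
    obtain ⟨p, hp, hmin⟩ := hcomp.exists_isMinOn hne
      ((continuous_const.dist continuous_id).continuousOn :
        ContinuousOn (fun z => dist y z) C)
    exact ⟨p, hp, fun z hz => hmin hz⟩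
  rw [metricProj, dif_pos h]
  exact ⟨h.choose_spec.1, h.choose_spec.2⟩

set_option maxHeartbeats 1000000 in
lemma proj_variational {C : Set (EuclideanSpace ℝ (Fin e))} (hconv : Convex ℝ C)
    {y p : EuclideanSpace ℝ (Fin e)} (hp : p ∈ C)
    (hmin : ∀ z ∈ C, dist y p ≤ dist y z) :
    ∀ z ∈ C, ⟪y - p, z - p⟫ ≤ 0 := by
  rw [← norm_eq_iInf_iff_real_inner_le_zero hconv hp]
  have : Nonempty C := ⟨⟨p, hp⟩⟩
  have bdd : BddBelow (Set.range fun w : C => ‖y - (w : EuclideanSpace ℝ (Fin e))‖) := by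
    refine ⟨0, ?_⟩
    rintro _ ⟨w, rfl⟩
    positivity
  have hA : ‖y - p‖ ≤ ⨅ w : C, ‖y - (w : EuclideanSpace ℝ (Fin e))‖ :=
    le_ciInf fun w => by simpa [dist_eq_norm] using hmin w w.2
  have hB : (⨅ w : C, ‖y - (w : EuclideanSpace ℝ (Fin e))‖) ≤ ‖y - p‖ :=
    ciInf_le bdd ⟨p, hp⟩
  linarith

/-- Key inner product inequality for the projection onto a convex set
containing a ball. -/
lemma proj_inner_ge {C : Set (EuclideanSpace ℝ (Fin e))}
    (hne : C.Nonempty) (hcomp : IsCompact C) (hconv : Convex ℝ C)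
    {x : EuclideanSpace ℝ (Fin e)} {r : ℝ} (hr : 0 < r)
    (hball : Metric.closedBall x r ⊆ C) (y : EuclideanSpace ℝ (Fin e))
    (hne' : y ≠ metricProj C y) :
    r * ‖y - metricProj C y‖ ≤ ⟪y - metricProj C y, metricProj C y - x⟫ := by
  obtain ⟨hpC, hmin⟩ := metricProj_spec hne hcomp y
  set p := metricProj C y with hp
  set v := y - p with hv
  have hv0 : v ≠ 0 := sub_ne_zero.mpr hne'
  have hvn : (0:ℝ) < ‖v‖ := norm_pos_iff.mpr hv0
  set z := x + (r * ‖v‖⁻¹) • v with hz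
  have hzC : z ∈ C := by
    apply hball
    simp only [Metric.mem_closedBall, hz, dist_self_add_left, norm_smul]
    rw [Real.norm_eq_abs, abs_of_nonneg (by positivity)]
    rw [mul_assoc, inv_mul_cancel₀ (ne_of_gt hvn), mul_one]
  have hvar := proj_variational hconv hpC hmin z hzC
  have hzp : z - p = (x - p) + (r * ‖v‖⁻¹) • v := by rw [hz]; abel
  rw [hzp, inner_add_right, real_inner_smul_right, real_inner_self_eq_norm_sq] at hvar
  have : r * ‖v‖⁻¹ * ‖v‖ ^ 2 = r * ‖v‖ := by
    field_simp
  rw [this] at hvar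
  have : ⟪v, x - p⟫ = - ⟪v, p - x⟫ := by
    rw [← inner_neg_right]; congr 1; abel
  rw [this] at hvar
  linarith

/-- General-dimension step estimate. -/
lemma step_general {C : Set (EuclideanSpace ℝ (Fin e))}
    (hne : C.Nonempty) (hcomp : IsCompact C) (hconv : Convex ℝ C)
    {x : EuclideanSpace ℝ (Fin e)} {r : ℝ} (hr : 0 < r)
    (hball : Metric.closedBall x r ⊆ C) (y : EuclideanSpace ℝ (Fin e)) :
    2 * r * ‖metricProj C y - y‖ ≤
      max (‖y - x‖ ^ 2) (r ^ 2) - max (‖metricProj C y - x‖ ^ 2) (r ^ 2) := by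
  set p := metricProj C y with hp
  by_cases hpy : y = p
  · rw [← hpy]; simp
  · have h1 := proj_inner_ge hne hcomp hconv hr hball y hpy
    have hcs : ⟪y - p, p - x⟫ ≤ ‖y - p‖ * ‖p - x‖ := real_inner_le_norm _ _
    have hvn : (0:ℝ) < ‖y - p‖ := norm_pos_iff.mpr (sub_ne_zero.mpr hpy)
    have hpx : r ≤ ‖p - x‖ := by
      have := h1.trans hcs
      nlinarith
    have hexp : ‖y - x‖ ^ 2 = ‖y - p‖ ^ 2 + 2 * ⟪y - p, p - x⟫ + ‖p - x‖ ^ 2 := by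
      have hd : y - x = (y - p) + (p - x) := by abel
      rw [hd, norm_add_sq_real]
    have h2 : ‖p - x‖ ^ 2 + 2 * r * ‖y - p‖ ≤ ‖y - x‖ ^ 2 := by nlinarith
    have hrx : r ^ 2 ≤ ‖p - x‖ ^ 2 := by nlinarith
    rw [max_eq_left hrx, max_eq_left (by nlinarith : r ^ 2 ≤ ‖y - x‖ ^ 2),
      norm_sub_rev p y]
    linarith

lemma abs_inner_low_dim (he : e ≤ 1) (u v : EuclideanSpace ℝ (Fin e)) :
    |⟪u, v⟫| = ‖u‖ * ‖v‖ := by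
  interval_cases e
  · simp [PiLp.inner_apply, EuclideanSpace.norm_eq]
  · simp [PiLp.inner_apply, RCLike.inner_apply, EuclideanSpace.norm_eq, Fin.sum_univ_one,
      Real.sqrt_sq_eq_abs, abs_mul]
    ring

/-- Low-dimension step estimate. -/
lemma step_low (he : e ≤ 1) {C : Set (EuclideanSpace ℝ (Fin e))}
    (hne : C.Nonempty) (hcomp : IsCompact C) (hconv : Convex ℝ C)
    {x : EuclideanSpace ℝ (Fin e)} {r : ℝ} (hr : 0 < r)
    (hball : Metric.closedBall x r ⊆ C) (y : EuclideanSpace ℝ (Fin e)) :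
    ‖metricProj C y - y‖ ≤ max (‖y - x‖) r - max (‖metricProj C y - x‖) r := by
  set p := metricProj C y with hp
  by_cases hpy : y = p
  · rw [← hpy]; simp
  · have h1 := proj_inner_ge hne hcomp hconv hr hball y hpy
    have hvn : (0:ℝ) < ‖y - p‖ := norm_pos_iff.mpr (sub_ne_zero.mpr hpy)
    have habs := abs_inner_low_dim he (y - p) (p - x)
    have hinner : ⟪y - p, p - x⟫ = ‖y - p‖ * ‖p - x‖ := by
      have h2 : 0 < ⟪y - p, p - x⟫ := lt_of_lt_of_le (by positivity) h1
      rw [← habs, abs_of_pos h2]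
    have hpx : r ≤ ‖p - x‖ := by
      rw [hinner] at h1; nlinarith
    have hexp : ‖y - x‖ ^ 2 = (‖y - p‖ + ‖p - x‖) ^ 2 := by
      have hd : y - x = (y - p) + (p - x) := by abel
      rw [hd, norm_add_sq_real, hinner]; ring
    have heq : ‖y - x‖ = ‖y - p‖ + ‖p - x‖ :=
      (sq_eq_sq₀ (norm_nonneg _) (by positivity)).mp hexp
    rw [max_eq_left hpx, max_eq_left (by linarith : r ≤ ‖y - x‖), norm_sub_rev p y]
    linarith

end Aux

theorem catchingUp_variation_le (e : ℕ) (T : ℝ) (hT : 0 < T)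
    (C : ℝ → Set (EuclideanSpace ℝ (Fin e)))
    (hC : ∀ t ∈ Set.Icc (0 : ℝ) T,
      (C t).Nonempty ∧ IsCompact (C t) ∧ Convex ℝ (C t))
    (hcont : ∀ t ∈ Set.Icc (0 : ℝ) T, ∀ ε > (0 : ℝ), ∃ δ > (0 : ℝ),
      ∀ s ∈ Set.Icc (0 : ℝ) T, |s - t| < δ →
        Metric.hausdorffDist (C s) (C t) < ε)
    (x : EuclideanSpace ℝ (Fin e)) (r : ℝ) (hr : 0 < r)
    (hball : ∀ t ∈ Set.Icc (0 : ℝ) T, Metric.closedBall x r ⊆ C t)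
    (a : EuclideanSpace ℝ (Fin e)) (ha : a ∈ C 0)
    (n : ℕ) (hn : 0 < n)
    (Y : ℕ → EuclideanSpace ℝ (Fin e))
    (hY0 : Y 0 = a)
    (hYrec : ∀ k < n, Y (k + 1) = metricProj (C ((k + 1) * T / n)) (Y k)) :
    ∑ k ∈ Finset.range n, ‖Y (k + 1) - Y k‖ ≤ valadierBound e r ‖a - x‖ := by
  have hn' : (0:ℝ) < (n:ℝ) := Nat.cast_pos.mpr hn
  have hmem : ∀ k : ℕ, k < n → ((k:ℝ) + 1) * T / (n:ℝ) ∈ Set.Icc (0:ℝ) T := by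
    intro k hk
    constructor
    · positivity
    · rw [div_le_iff₀ hn']
      have : (k:ℝ) + 1 ≤ (n:ℝ) := by exact_mod_cast Nat.succ_le_of_lt hk
      nlinarith
  by_cases he : 1 < e
  · -- general case
    set g : ℕ → ℝ := fun k => max (‖Y k - x‖ ^ 2) (r ^ 2) with hg
    have key : ∀ k ∈ Finset.range n,
        2 * r * ‖Y (k + 1) - Y k‖ ≤ g k - g (k + 1) := by
      intro k hk
      rw [Finset.mem_range] at hk
      have hs := hmem k hk
      obtain ⟨h1, h2, h3⟩ := hC _ hs
      have hrec := hYrec k hk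
      simp only [hg]
      rw [hrec]
      exact step_general h1 h2 h3 hr (hball _ hs) (Y k)
    have hsum : 2 * r * ∑ k ∈ Finset.range n, ‖Y (k + 1) - Y k‖ ≤ g 0 - g n := by
      rw [Finset.mul_sum, ← Finset.sum_range_sub' g n]
      exact Finset.sum_le_sum key
    have hgn : r ^ 2 ≤ g n := le_max_right _ _
    have hg0 : g 0 = max (‖a - x‖ ^ 2) (r ^ 2) := by rw [hg]; simp [hY0]
    rw [valadierBound, if_pos he]
    rcases le_total (‖a - x‖ ^ 2) (r ^ 2) with h | h
    · have : g 0 = r ^ 2 := by rw [hg0, max_eq_right h]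
      have hS : ∑ k ∈ Finset.range n, ‖Y (k + 1) - Y k‖ ≤ 0 := by nlinarith
      exact hS.trans (le_max_left _ _)
    · have : g 0 = ‖a - x‖ ^ 2 := by rw [hg0, max_eq_left h]
      have hS : ∑ k ∈ Finset.range n, ‖Y (k + 1) - Y k‖ ≤
          (‖a - x‖ ^ 2 - r ^ 2) / (2 * r) := by
        rw [le_div_iff₀ (by positivity)]
        nlinarith
      exact hS.trans (le_max_right _ _)
  · -- low-dimension case
    have he' : e ≤ 1 := Nat.le_of_lt_succ (Nat.lt_succ_of_le (Nat.le_of_not_lt he))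
    set g : ℕ → ℝ := fun k => max (‖Y k - x‖) r with hg
    have key : ∀ k ∈ Finset.range n,
        ‖Y (k + 1) - Y k‖ ≤ g k - g (k + 1) := by
      intro k hk
      rw [Finset.mem_range] at hk
      have hs := hmem k hk
      obtain ⟨h1, h2, h3⟩ := hC _ hs
      have hrec := hYrec k hk
      simp only [hg]
      rw [hrec]
      exact step_low he' h1 h2 h3 hr (hball _ hs) (Y k)
    have hsum : ∑ k ∈ Finset.range n, ‖Y (k + 1) - Y k‖ ≤ g 0 - g n := by
      rw [← Finset.sum_range_sub' g n]
      exact Finset.sum_le_sum key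
    have hgn : r ≤ g n := le_max_right _ _
    have hg0 : g 0 = max (‖a - x‖) r := by rw [hg]; simp [hY0]
    rw [valadierBound, if_neg he]
    rcases le_total (‖a - x‖) r with h | h
    · have : g 0 = r := by rw [hg0, max_eq_right h]
      have hS : ∑ k ∈ Finset.range n, ‖Y (k + 1) - Y k‖ ≤ 0 := by linarith
      exact hS.trans (le_max_left _ _)
    · have : g 0 = ‖a - x‖ := by rw [hg0, max_eq_left h]
      have hS : ∑ k ∈ Finset.range n, ‖Y (k + 1) - Y k‖ ≤ ‖a - x‖ - r := by linarith
      exact hS.trans (le_max_right _ _)
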